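/- Suppose Y = f(β₁ᵀX, …, β_KᵀX, ε) for a measurable f with ε independent of X and Y square-integrable, and suppose E[X | σ(BᵀX)] = μ + Σ B (BᵀΣB)⁻¹ Bᵀ (X − μ) almost surely. Then for every Borel set S ⊆ ℝ with P(Y ∈ S) > 0, the conditional covariance vector satisfies Cov(X, Y | Y ∈ S) = Σ B (BᵀΣB)⁻¹ Bᵀ Cov(X, Y | Y ∈ S); in particular Cov(X, Y | Y ∈ S) lies in the column space of Σ B. -/

import Mathlib

open MeasureTheory ProbabilityTheory Matrix
open scoped ENNReal

lemma sup_eq_genFrom_inter {α : Type*} (m₁ m₂ : MeasurableSpace α) :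
    m₁ ⊔ m₂ = MeasurableSpace.generateFrom
      {u | ∃ s t, MeasurableSet[m₁] s ∧ MeasurableSet[m₂] t ∧ u = s ∩ t} := by
  apply le_antisymm
  · refine sup_le (fun s hs => ?_) (fun s hs => ?_)
    · exact MeasurableSpace.measurableSet_generateFrom ⟨s, Set.univ, hs, MeasurableSet.univ,
        (Set.inter_univ s).symm⟩
    · exact MeasurableSpace.measurableSet_generateFrom ⟨Set.univ, s, MeasurableSet.univ, hs,
        (Set.univ_inter s).symm⟩
  · refine MeasurableSpace.generateFrom_le ?_
    rintro u ⟨s, t, hs, ht, rfl⟩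
    exact ((le_sup_left : m₁ ≤ m₁ ⊔ m₂) _ hs).inter ((le_sup_right : m₂ ≤ m₁ ⊔ m₂) _ ht)

lemma isPiSystem_inter_sets {α : Type*} (m₁ m₂ : MeasurableSpace α) :
    IsPiSystem {u | ∃ s t, MeasurableSet[m₁] s ∧ MeasurableSet[m₂] t ∧ u = s ∩ t} := by
  rintro u ⟨s, t, hs, ht, rfl⟩ v ⟨s', t', hs', ht', rfl⟩ -
  exact ⟨s ∩ s', t ∩ t', hs.inter hs', ht.inter ht', by rw [Set.inter_inter_inter_comm]⟩

lemma mulVec_measurable {n m : ℕ} (A : Matrix (Fin n) (Fin m) ℝ) :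
    Measurable fun x : Fin m → ℝ => A *ᵥ x := by
  refine measurable_pi_lambda _ fun k => ?_
  simp only [Matrix.mulVec, dotProduct]
  exact Finset.measurable_sum _ fun i _ => (measurable_pi_apply i).const_mul _

lemma memLp_mul_integrable {Ω : Type*} [MeasurableSpace Ω] {P : Measure Ω}
    {f g : Ω → ℝ} (hf : MemLp f 2 P) (hg : MemLp g 2 P) :
    Integrable (fun ω => f ω * g ω) P := by
  have h : MemLp (g • f) 1 P := hf.smul hg (hpqr := ⟨by
    rw [ENNReal.inv_two_add_inv_two, inv_one]⟩)
  have h2 := memLp_one_iff_integrable.mp h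
  simpa [Pi.smul_apply, smul_eq_mul, mul_comm, Pi.mul_def] using h2

/-- under the model `Y = f(β₁ᵀX,…,β_KᵀX, ε)` with `ε` independent of `X`
and the conditional-mean formula `E[X | σ(BᵀX)] = μ + ΣB(BᵀΣB)⁻¹Bᵀ(X − μ)` a.s., the
slice covariance satisfies `Cov(X, Y | Y ∈ S) = ΣB(BᵀΣB)⁻¹Bᵀ Cov(X, Y | Y ∈ S)`; in
particular it lies in the column space of `ΣB`. -/
theorem stmt_5 {Ω : Type*} [MeasurableSpace Ω] (P : Measure Ω) [IsProbabilityMeasure P]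
    {p K : ℕ} (X : Ω → Fin p → ℝ) (hX : Measurable X)
    (hX2 : ∀ i, MemLp (fun ω => X ω i) 2 P)
    (Y : Ω → ℝ) (hY2 : MemLp Y 2 P)
    (μ : Fin p → ℝ) (hμ : ∀ i, μ i = ∫ ω, X ω i ∂P)
    (Sig : Matrix (Fin p) (Fin p) ℝ)
    (hSig : ∀ i j, Sig i j = ∫ ω, (X ω i - μ i) * (X ω j - μ j) ∂P)
    (hSigInv : IsUnit Sig.det)
    (β : Fin K → (Fin p → ℝ)) (B : Matrix (Fin p) (Fin K) ℝ) (hB : ∀ i k, B i k = β k i)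
    (hBSB : IsUnit (Bᵀ * Sig * B).det)
    -- the model: Y = f(β₁ᵀX, …, β_KᵀX, ε) with ε independent of X
    (f : (Fin K → ℝ) → ℝ → ℝ) (hf : Measurable fun q : (Fin K → ℝ) × ℝ => f q.1 q.2)
    (eps : Ω → ℝ) (heps : Measurable eps) (hindep : IndepFun X eps P)
    (hmodel : ∀ ω, Y ω = f (fun k => β k ⬝ᵥ X ω) (eps ω))
    -- the conditional mean formula E[X | σ(BᵀX)] = μ + ΣB(BᵀΣB)⁻¹Bᵀ(X − μ) a.s.
    (hE : ∀ i, P[(fun ω => X ω i) | MeasurableSpace.comap (fun ω => Bᵀ *ᵥ X ω) inferInstance]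
      =ᵐ[P] fun ω => μ i + ((Sig * B * (Bᵀ * Sig * B)⁻¹ * Bᵀ) *ᵥ (X ω - μ)) i) :
    ∀ (S : Set ℝ), MeasurableSet S → 0 < P (Y ⁻¹' S) →
      ∀ (μS : Fin p → ℝ), (∀ i, μS i = ∫ ω, X ω i ∂(P[|Y ⁻¹' S])) →
      ∀ (μyS : ℝ), μyS = (∫ ω, Y ω ∂(P[|Y ⁻¹' S])) →
      ∀ (CovS : Fin p → ℝ), (∀ i, CovS i = ∫ ω, (X ω i - μS i) * (Y ω - μyS) ∂(P[|Y ⁻¹' S])) →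
      CovS = (Sig * B * (Bᵀ * Sig * B)⁻¹ * Bᵀ) *ᵥ CovS ∧
        ∃ u : Fin K → ℝ, CovS = (Sig * B) *ᵥ u := by
  intro S hSmeas hPS μS hμS μyS hμyS CovS hCovS
  set M : Matrix (Fin p) (Fin p) ℝ := Sig * B * (Bᵀ * Sig * B)⁻¹ * Bᵀ with hMdef
  set s : Set Ω := Y ⁻¹' S with hsdef
  -- basic measurability
  have hXi : ∀ i, Measurable fun ω => X ω i := fun i => (measurable_pi_apply i).comp hX
  have hV : Measurable fun ω => Bᵀ *ᵥ X ω := (mulVec_measurable Bᵀ).comp hX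
  have hβV : ∀ ω, (fun k => β k ⬝ᵥ X ω) = Bᵀ *ᵥ X ω := by
    intro ω; funext k
    simp only [Matrix.mulVec, dotProduct, Matrix.transpose_apply, hB]
  have hYeq : Y = fun ω => f (Bᵀ *ᵥ X ω) (eps ω) := funext fun ω => by rw [hmodel ω, hβV ω]
  have hY : Measurable Y := by rw [hYeq]; exact hf.comp (hV.prodMk heps)
  have hs : MeasurableSet s := hY hSmeas
  -- the projected conditional mean function φ
  set φ : Fin p → Ω → ℝ := fun i ω => μ i + (M *ᵥ (X ω - μ)) i with hφdef
  have hφ' : ∀ i ω, φ i ω = μ i + ∑ j, M i j * (X ω j - μ j) := by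
    intro i ω
    simp only [hφdef, Matrix.mulVec, dotProduct, Pi.sub_apply]
  have hφ2 : ∀ i, MemLp (φ i) 2 P := by
    intro i
    have hrw : φ i = fun ω => μ i + ∑ j, M i j * (X ω j - μ j) := funext (hφ' i)
    rw [hrw]
    have h1 : ∀ j, MemLp (fun ω => M i j * (X ω j - μ j)) 2 P := fun j =>
      ((hX2 j).sub (memLp_const (μ j))).const_mul (M i j)
    exact (memLp_const (μ i)).add (memLp_finsetSum Finset.univ fun j _ => h1 j)
  have hXiInt : ∀ i, Integrable (fun ω => X ω i) P := fun i => (hX2 i).integrable one_le_two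
  have hφInt : ∀ i, Integrable (φ i) P := fun i => (hφ2 i).integrable one_le_two
  -- the weight function W
  set W : Ω → ℝ := s.indicator (fun ω => Y ω - μyS) with hWdef
  have hW2 : MemLp W 2 P := (hY2.sub (memLp_const μyS)).indicator hs
  have hWint : Integrable W P := hW2.integrable one_le_two
  -- conditional measure bookkeeping
  have hPs_ne : P s ≠ 0 := hPS.ne'
  have hPs_top : P s ≠ ⊤ := measure_ne_top P s
  set c : ℝ := (P s).toReal with hcdef
  have hc : 0 < c := ENNReal.toReal_pos hPs_ne hPs_top
  have hcint : ∀ g : Ω → ℝ, ∫ ω, g ω ∂(P[|s]) = c⁻¹ * ∫ ω in s, g ω ∂P := by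
    intro g
    rw [ProbabilityTheory.cond, integral_smul_measure, smul_eq_mul, ENNReal.toReal_inv]
  have hWmul : ∀ (g : Ω → ℝ) (ω : Ω),
      s.indicator (fun ω => g ω * (Y ω - μyS)) ω = g ω * W ω := by
    intro g ω
    by_cases h : ω ∈ s <;>
      simp [hWdef, Set.indicator_of_mem, Set.indicator_of_notMem, h]
  -- ∫ W = 0
  have hYintS : Integrable Y (P[|s]) := by
    rw [ProbabilityTheory.cond]
    exact ((hY2.integrable one_le_two).restrict).smul_measure (ENNReal.inv_ne_top.mpr hPs_ne)
  haveI : IsProbabilityMeasure (P[|s]) := cond_isProbabilityMeasure hPs_ne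
  have hintW : ∫ ω, W ω ∂P = 0 := by
    have h1 : ∫ ω, (Y ω - μyS) ∂(P[|s]) = 0 := by
      rw [integral_sub hYintS (integrable_const _), integral_const]
      simp [hμyS]
    have h2 := hcint (fun ω => Y ω - μyS)
    rw [h1] at h2
    have h3 : ∫ ω in s, (Y ω - μyS) ∂P = 0 := by
      have hcne : c⁻¹ ≠ 0 := inv_ne_zero hc.ne'
      field_simp at h2
      linarith
    rw [hWdef, integral_indicator hs, h3]
  -- ∫ Xᵢ·W = c · CovSᵢ
  have hXW : ∀ i, ∫ ω, X ω i * W ω ∂P = c * CovS i := by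
    intro i
    have e2 : ∫ ω in s, (X ω i - μS i) * (Y ω - μyS) ∂P
        = ∫ ω, (X ω i - μS i) * W ω ∂P := by
      rw [← integral_indicator hs]
      exact integral_congr_ae (Filter.Eventually.of_forall
        (fun ω => hWmul (fun ω => X ω i - μS i) ω))
    have e3 : ∫ ω, (X ω i - μS i) * W ω ∂P = ∫ ω, X ω i * W ω ∂P := by
      have : ∀ ω, (X ω i - μS i) * W ω = X ω i * W ω - μS i * W ω := fun ω => by ring
      simp_rw [this]
      rw [integral_sub (memLp_mul_integrable (hX2 i) hW2) (hWint.const_mul (μS i)),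
        integral_const_mul, hintW, mul_zero, sub_zero]
    have e1 : CovS i = c⁻¹ * ∫ ω, X ω i * W ω ∂P := by
      rw [hCovS i, hcint, e2, e3]
    rw [e1]
    field_simp
  -- σ-algebras
  have hmV := hV.comap_le
  have hmE := heps.comap_le
  have hm := sup_le hmV hmE
  haveI : SigmaFinite (P.trim hm) := by
    haveI := isFiniteMeasure_trim hm (μ := P)
    infer_instance
  haveI : SigmaFinite (P.trim hmV) := by
    haveI := isFiniteMeasure_trim hmV (μ := P)
    infer_instance
  -- measurability of W w.r.t. the joined σ-algebra
  have hVm : Measurable[(MeasurableSpace.comap (fun ω => Bᵀ *ᵥ X ω) inferInstance ⊔ MeasurableSpace.comap eps inferInstance)] (fun ω => Bᵀ *ᵥ X ω) :=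
    measurable_iff_comap_le.mpr le_sup_left
  have hEm : Measurable[(MeasurableSpace.comap (fun ω => Bᵀ *ᵥ X ω) inferInstance ⊔ MeasurableSpace.comap eps inferInstance)] eps := measurable_iff_comap_le.mpr le_sup_right
  have hYm : Measurable[(MeasurableSpace.comap (fun ω => Bᵀ *ᵥ X ω) inferInstance ⊔ MeasurableSpace.comap eps inferInstance)] Y := by rw [hYeq]; exact hf.comp (hVm.prodMk hEm)
  have hsm : MeasurableSet[(MeasurableSpace.comap (fun ω => Bᵀ *ᵥ X ω) inferInstance ⊔ MeasurableSpace.comap eps inferInstance)] s := hYm hSmeas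
  have hWm : StronglyMeasurable[(MeasurableSpace.comap (fun ω => Bᵀ *ᵥ X ω) inferInstance ⊔ MeasurableSpace.comap eps inferInstance)] W :=
    ((hYm.sub measurable_const).indicator hsm).stronglyMeasurable
  -- mV-measurability of φ i
  have hφmV : ∀ i, StronglyMeasurable[MeasurableSpace.comap (fun ω => Bᵀ *ᵥ X ω) inferInstance] (φ i) := by
    intro i
    have hcomp : φ i = (fun v : Fin K → ℝ =>
        μ i + ((Sig * B * (Bᵀ * Sig * B)⁻¹) *ᵥ (v - Bᵀ *ᵥ μ)) i) ∘ (fun ω => Bᵀ *ᵥ X ω) := by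
      funext ω
      simp only [hφdef, Function.comp_apply]
      rw [hMdef, ← Matrix.mulVec_sub, Matrix.mulVec_mulVec]
    have hmeas : Measurable fun v : Fin K → ℝ =>
        μ i + ((Sig * B * (Bᵀ * Sig * B)⁻¹) *ᵥ (v - Bᵀ *ᵥ μ)) i := by
      refine measurable_const.add ((measurable_pi_apply i).comp
        ((mulVec_measurable _).comp (measurable_id.sub measurable_const)))
    rw [hcomp]
    exact (Measurable.stronglyMeasurable
      (hmeas.comp (measurable_iff_comap_le.mpr le_rfl)))
  -- total integrals agree
  have hzero : ∀ j, ∫ ω, (X ω j - μ j) ∂P = 0 := by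
    intro j
    rw [integral_sub (hXiInt j) (integrable_const _), integral_const]
    simp [hμ j]
  have htot : ∀ i, ∫ ω, φ i ω ∂P = ∫ ω, X ω i ∂P := by
    intro i
    have hrw : φ i = fun ω => μ i + ∑ j, M i j * (X ω j - μ j) := funext (hφ' i)
    rw [hrw]
    have hterm : ∀ j, Integrable (fun ω => M i j * (X ω j - μ j)) P := fun j => by
      simpa using (((hXiInt j).sub (integrable_const (μ j))).const_mul (M i j))
    have hsum : Integrable (fun ω => ∑ j, M i j * (X ω j - μ j)) P :=
      integrable_finset_sum _ fun j _ => hterm j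
    rw [integral_add (integrable_const _) hsum, integral_const,
      integral_finset_sum _ (fun j _ => hterm j)]
    simp only [integral_const_mul]
    simp [hzero, ← hμ i]
  -- set integrals agree on the join σ-algebra
  have hsetEq : ∀ i, ∀ A : Set Ω, MeasurableSet[(MeasurableSpace.comap (fun ω => Bᵀ *ᵥ X ω) inferInstance ⊔ MeasurableSpace.comap eps inferInstance)] A →
      ∫ ω in A, φ i ω ∂P = ∫ ω in A, X ω i ∂P := by
    intro i
    have key : ∀ (g : Ω → ℝ) (F : (Fin p → ℝ) → ℝ), Measurable F → Integrable g P →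
        (∀ ω, g ω = F (X ω)) → ∀ (u' : Set (Fin K → ℝ)) (t' : Set ℝ),
        MeasurableSet u' → MeasurableSet t' →
        ∫ ω in ((fun ω => Bᵀ *ᵥ X ω) ⁻¹' u' ∩ eps ⁻¹' t'), g ω ∂P
          = (∫ ω in (fun ω => Bᵀ *ᵥ X ω) ⁻¹' u', g ω ∂P) * (P (eps ⁻¹' t')).toReal := by
      intro g F hF hgInt hgF u' t' hu' ht'
      have hF' : Measurable fun x : Fin p → ℝ =>
          F x * Set.indicator u' (fun _ => (1:ℝ)) (Bᵀ *ᵥ x) :=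
        hF.mul ((measurable_const.indicator hu').comp (mulVec_measurable Bᵀ))
      have hG : Measurable fun e : ℝ => Set.indicator t' (fun _ => (1:ℝ)) e :=
        measurable_const.indicator ht'
      have hid := hindep.comp hF' hG
      have e1 : ((fun x : Fin p → ℝ => F x * Set.indicator u' (fun _ => (1:ℝ)) (Bᵀ *ᵥ x)) ∘ X)
          = ((fun ω => Bᵀ *ᵥ X ω) ⁻¹' u').indicator g := by
        funext ω
        by_cases h : (Bᵀ *ᵥ X ω) ∈ u' <;>
          simp [Function.comp, Set.indicator, h, hgF ω]
      have e2 : ((fun e : ℝ => Set.indicator t' (fun _ => (1:ℝ)) e) ∘ eps)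
          = (eps ⁻¹' t').indicator (fun _ => (1:ℝ)) := by
        funext ω
        by_cases h : eps ω ∈ t' <;> simp [Function.comp, Set.indicator, h]
      rw [e1, e2] at hid
      have hint1 : Integrable (((fun ω => Bᵀ *ᵥ X ω) ⁻¹' u').indicator g) P :=
        hgInt.indicator (hV hu')
      have hint2 : Integrable ((eps ⁻¹' t').indicator (fun _ => (1:ℝ))) P :=
        (integrable_const _).indicator (heps ht')
      have hmul := hid.integral_mul_eq_mul_integral hint1.1 hint2.1
      have e3 : (((fun ω => Bᵀ *ᵥ X ω) ⁻¹' u').indicator g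
          * (eps ⁻¹' t').indicator (fun _ => (1:ℝ)))
          = ((fun ω => Bᵀ *ᵥ X ω) ⁻¹' u' ∩ eps ⁻¹' t').indicator g := by
        funext ω
        by_cases h1 : (Bᵀ *ᵥ X ω) ∈ u' <;> by_cases h2 : eps ω ∈ t' <;>
          simp [Set.indicator, h1, h2]
      rw [e3] at hmul
      rw [← integral_indicator ((hV hu').inter (heps ht')), hmul,
        integral_indicator (hV hu'), integral_indicator (heps ht')]
      congr 1
      rw [setIntegral_const, smul_eq_mul, mul_one, Measure.real_def]
    intro A hA
    refine @MeasurableSpace.induction_on_inter Ω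
      (MeasurableSpace.comap (fun ω => Bᵀ *ᵥ X ω) inferInstance
        ⊔ MeasurableSpace.comap eps inferInstance)
      (fun A _ => ∫ ω in A, φ i ω ∂P = ∫ ω in A, X ω i ∂P) _
      (sup_eq_genFrom_inter (MeasurableSpace.comap (fun ω => Bᵀ *ᵥ X ω) inferInstance)
        (MeasurableSpace.comap eps inferInstance))
      (isPiSystem_inter_sets _ _) (by simp) ?_ ?_ ?_ A hA
    · rintro A' ⟨A₁, A₂, h₁, h₂, rfl⟩
      obtain ⟨u', hu', rfl⟩ := h₁
      obtain ⟨t', ht', rfl⟩ := h₂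
      have hmid : ∫ ω in (fun ω => Bᵀ *ᵥ X ω) ⁻¹' u', φ i ω ∂P
          = ∫ ω in (fun ω => Bᵀ *ᵥ X ω) ⁻¹' u', X ω i ∂P := by
        have hA₁mV : MeasurableSet[MeasurableSpace.comap (fun ω => Bᵀ *ᵥ X ω) inferInstance] ((fun ω => Bᵀ *ᵥ X ω) ⁻¹' u') := ⟨u', hu', rfl⟩
        have h1 := setIntegral_condExp hmV (hXiInt i) hA₁mV
        have h2 : ∫ ω in (fun ω => Bᵀ *ᵥ X ω) ⁻¹' u',
            (P[(fun ω => X ω i)|MeasurableSpace.comap (fun ω => Bᵀ *ᵥ X ω) inferInstance]) ω ∂P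
            = ∫ ω in (fun ω => Bᵀ *ᵥ X ω) ⁻¹' u', φ i ω ∂P :=
          integral_congr_ae (ae_restrict_of_ae (hE i))
        rw [← h1, h2]
      rw [key (φ i) (fun x => μ i + (M *ᵥ (x - μ)) i)
          (measurable_const.add ((measurable_pi_apply i).comp
            ((mulVec_measurable M).comp (measurable_id.sub measurable_const))))
          (hφInt i) (fun ω => rfl) u' t' hu' ht',
        key (fun ω => X ω i) (fun x => x i) (measurable_pi_apply i)
          (hXiInt i) (fun ω => rfl) u' t' hu' ht', hmid]
    · intro A' hAm hA'
      have hAmb : MeasurableSet A' := hm _ hAm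
      have h1 := integral_add_compl hAmb (hφInt i)
      have h2 := integral_add_compl hAmb (hXiInt i)
      have := htot i
      linarith
    · intro g hdisj hgm hg
      rw [integral_iUnion (fun n => hm _ (hgm n)) hdisj (hφInt i).integrableOn,
        integral_iUnion (fun n => hm _ (hgm n)) hdisj (hXiInt i).integrableOn]
      exact tsum_congr hg
  -- conditional expectation w.r.t. the join equals φ
  have hcondm : ∀ i, (φ i) =ᵐ[P] P[(fun ω => X ω i)| (MeasurableSpace.comap (fun ω => Bᵀ *ᵥ X ω) inferInstance ⊔ MeasurableSpace.comap eps inferInstance)] := fun i =>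
    ae_eq_condExp_of_forall_setIntegral_eq hm (hXiInt i)
      (fun A hAm _ => (hφInt i).integrableOn)
      (fun A hAm _ => hsetEq i A hAm)
      (by
        have h := (hφmV i).mono (le_sup_left : MeasurableSpace.comap (fun ω => Bᵀ *ᵥ X ω) inferInstance ≤ MeasurableSpace.comap (fun ω => Bᵀ *ᵥ X ω) inferInstance ⊔ MeasurableSpace.comap eps inferInstance)
        exact h.aestronglyMeasurable)
  -- the key exchange identity
  have hkey : ∀ i, ∫ ω, X ω i * W ω ∂P = ∫ ω, φ i ω * W ω ∂P := by
    intro i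
    have hWX : Integrable (W * fun ω => X ω i) P := by
      have h := memLp_mul_integrable hW2 (hX2 i)
      exact h
    have h1 : P[(W * fun ω => X ω i) | (MeasurableSpace.comap (fun ω => Bᵀ *ᵥ X ω) inferInstance ⊔ MeasurableSpace.comap eps inferInstance)]
        =ᵐ[P] W * P[(fun ω => X ω i) | (MeasurableSpace.comap (fun ω => Bᵀ *ᵥ X ω) inferInstance ⊔ MeasurableSpace.comap eps inferInstance)] :=
      condExp_mul_of_stronglyMeasurable_left hWm hWX (hXiInt i)
    have e0 : (fun ω => X ω i * W ω) = (W * fun ω => X ω i) :=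
      funext fun ω => mul_comm _ _
    rw [e0, ← integral_condExp hm, integral_congr_ae h1]
    refine integral_congr_ae ?_
    filter_upwards [hcondm i] with ω h
    simp only [Pi.mul_apply, ← h]
    ring
  -- compute ∫ φᵢ·W
  have hφW : ∀ i, ∫ ω, φ i ω * W ω ∂P = ∑ j, M i j * (c * CovS j) := by
    intro i
    have hrw : ∀ ω, φ i ω * W ω
        = μ i * W ω + ∑ j, M i j * ((X ω j - μ j) * W ω) := by
      intro ω
      rw [hφ' i ω, add_mul, Finset.sum_mul]
      congr 1
      exact Finset.sum_congr rfl fun j _ => by ring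
    simp_rw [hrw]
    have hintj : ∀ j, Integrable (fun ω => (X ω j - μ j) * W ω) P := fun j =>
      memLp_mul_integrable ((hX2 j).sub (memLp_const (μ j))) hW2
    have hterm : ∀ j, Integrable (fun ω => M i j * ((X ω j - μ j) * W ω)) P := fun j =>
      (hintj j).const_mul _
    have hsum : Integrable (fun ω => ∑ j, M i j * ((X ω j - μ j) * W ω)) P :=
      integrable_finset_sum _ fun j _ => hterm j
    rw [integral_add (hWint.const_mul (μ i)) hsum, integral_const_mul, hintW, mul_zero,
      zero_add, integral_finset_sum _ (fun j _ => hterm j)]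
    refine Finset.sum_congr rfl fun j _ => ?_
    rw [integral_const_mul]
    congr 1
    have : ∀ ω, (X ω j - μ j) * W ω = X ω j * W ω - μ j * W ω := fun ω => by ring
    simp_rw [this]
    rw [integral_sub (memLp_mul_integrable (hX2 j) hW2) (hWint.const_mul _),
      integral_const_mul, hintW, mul_zero, sub_zero, hXW j]
  -- conclude
  have hmain : CovS = M *ᵥ CovS := by
    funext i
    have h := hXW i
    rw [hkey i, hφW i] at h
    have h2 : c * CovS i = c * ∑ j, M i j * CovS j := by
      rw [← h]
      rw [Finset.mul_sum]
      exact Finset.sum_congr rfl fun j _ => by ring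
    have := mul_left_cancel₀ hc.ne' h2
    rw [this]
    simp [Matrix.mulVec, dotProduct]
  refine ⟨hmain, ⟨((Bᵀ * Sig * B)⁻¹ * Bᵀ) *ᵥ CovS, ?_⟩⟩
  rw [Matrix.mulVec_mulVec, ← Matrix.mul_assoc, ← hMdef]
  exact hmain
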